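/- arXiv:1104.5265 — 3 statements merged into one kernel-verified Lean document; each statement's English description precedes it below -/
import Mathlib

section
/- A pointed compactum (X, x₀) is a PAANR if and only if the following holds: for every compactum Z, every closed subset Y ⊆ Z, every point y₀ ∈ Y, every decreasing sequence Y₁ ⊇ Y₂ ⊇ ⋯ of closed subsets of Z with ⋂ₙ Yₙ = Y, and every continuous function λ : Y → X with λ(y₀) = x₀, there exists a sequence of continuous functions λₙ : Yₙ → X such that λₙ(y₀) = λ(y₀) for every n and λₙ(y) → λ(y) uniformly over y ∈ Y (uniform convergence with respect to some, equivalently any, compatible metric on X). -/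
open Topology

universe u v

/-- A pointed compactum `(X, x₀)` is a *pointed approximative absolute neighborhood
retract* (PAANR) if for every compact metric space `Y`, every topological embedding
`θ : X → Y`, and every `ε > 0`, there exist `δ > 0` and a continuous map
`r : U_δ → X` (where `U_δ = {y | dist (y, θ(X)) ≤ δ}`) with `r (θ x₀) = x₀` which moves
the points of `θ(X)` by at most `ε`. -/
def IsPAANR (X : Type u) [TopologicalSpace X] (x₀ : X) : Prop :=
  ∀ (Y : Type v) [MetricSpace Y] [CompactSpace Y] (θ : X → Y),
    IsEmbedding θ →
    ∀ ε > (0 : ℝ), ∃ δ > (0 : ℝ), ∃ r : Y → X,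
      ContinuousOn r {y | Metric.infDist y (Set.range θ) ≤ δ} ∧
      r (θ x₀) = x₀ ∧
      ∀ x : X, dist (θ (r (θ x))) (θ x) ≤ ε

open Metric Set

universe w

instance : TietzeExtension.{u} (Set.Icc (0:ℝ) 1) :=
  .of_retract ⟨Subtype.val, continuous_subtype_val⟩ ⟨Set.projIcc 0 1 zero_le_one, continuous_projIcc⟩
    (by ext x; simp)

lemma exists_nat_one_div_le' {ε : ℝ} (hε : 0 < ε) : ∃ K : ℕ, 1/((K:ℝ)+1) ≤ ε := by
  obtain ⟨K, hK⟩ := exists_nat_gt (1/ε)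
  refine ⟨K, ?_⟩
  have hKpos : (0:ℝ) < (K:ℝ)+1 := by positivity
  rw [div_le_iff₀ hKpos]
  have h1 : 1/ε < (K:ℝ)+1 := hK.trans (by linarith)
  have := (div_lt_iff₀ hε).mp h1
  linarith

/-- Every nonempty compact metric space embeds in the Hilbert cube. -/
lemma exists_embedding_hilbertCube (X : Type u) [MetricSpace X] [CompactSpace X] [Nonempty X] :
    ∃ e : X → (ℕ → Set.Icc (0:ℝ) 1), IsEmbedding e := by
  obtain ⟨s, hs⟩ : ∃ s : ℕ → X, DenseRange s := ⟨_, TopologicalSpace.denseRange_denseSeq X⟩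
  refine ⟨fun x n => Set.projIcc 0 1 zero_le_one (dist x (s n)), ?_⟩
  have hcont : Continuous fun x : X => fun n => Set.projIcc 0 1 zero_le_one (dist x (s n)) :=
    continuous_pi fun n => continuous_projIcc.comp (continuous_id.dist continuous_const)
  have hinj : Function.Injective
      fun x : X => fun n => Set.projIcc 0 1 zero_le_one (dist x (s n)) := by
    intro a b hab
    by_contra hne
    have hd : 0 < dist a b := dist_pos.mpr hne
    set ε := min (dist a b / 2) (1/2) with hε
    have hεpos : 0 < ε := lt_min (by linarith) (by norm_num)
    obtain ⟨n, hy⟩ := hs.exists_dist_lt a hεpos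
    have h1 : dist a (s n) < 1 := hy.trans_le ((min_le_right _ _).trans (by norm_num))
    have hε1 : ε ≤ dist a b / 2 := min_le_left _ _
    have h2 : dist a (s n) < dist b (s n) := by
      have htri : dist a b ≤ dist a (s n) + dist b (s n) := dist_triangle_right a b (s n)
      linarith [hy.trans_le hε1]
    have := congrFun hab n
    have hval := congrArg (Subtype.val) this
    simp only [Set.projIcc, Subtype.coe_mk] at hval
    have ha' : max 0 (min 1 (dist a (s n))) = dist a (s n) := by
      rw [min_eq_right h1.le, max_eq_right dist_nonneg]
    have hb' : max 0 (min 1 (dist b (s n))) ≥ min 1 (dist b (s n)) := le_max_right _ _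
    rw [ha'] at hval
    have : dist a (s n) ≥ min 1 (dist b (s n)) := hval ▸ hb'
    rcases le_or_gt 1 (dist b (s n)) with h | h
    · rw [min_eq_left h] at this; linarith
    · rw [min_eq_right h.le] at this; linarith
  exact (hcont.isClosedEmbedding hinj).isEmbedding

/-- Uniform continuity of the inverse of an embedding of a compact metric space. -/
lemma exists_inv_modulus {X : Type u} {Y : Type v} [MetricSpace X] [CompactSpace X]
    [MetricSpace Y] {θ : X → Y} (hθ : IsEmbedding θ) :
    ∀ ε > (0:ℝ), ∃ η > (0:ℝ), ∀ a b : X, dist (θ a) (θ b) ≤ η → dist a b ≤ ε := by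
  intro ε hε
  let h := hθ.toHomeomorph
  have hu : UniformContinuous fun y : Set.range θ => h.symm y :=
    have : CompactSpace (Set.range θ) :=
      isCompact_iff_compactSpace.mp (isCompact_range hθ.continuous)
    CompactSpace.uniformContinuous_of_continuous h.symm.continuous
  rw [Metric.uniformContinuous_iff] at hu
  obtain ⟨δ, hδ, hδ'⟩ := hu ε hε
  refine ⟨δ/2, by linarith, fun a b hab => ?_⟩
  have key : ∀ x : X, h.symm ⟨θ x, Set.mem_range_self x⟩ = x := fun x => by
    have : h x = ⟨θ x, Set.mem_range_self x⟩ := rfl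
    rw [← this, Homeomorph.symm_apply_apply]
  have := hδ' (a := ⟨θ a, Set.mem_range_self a⟩) (b := ⟨θ b, Set.mem_range_self b⟩)
    (by rw [Subtype.dist_eq]; exact lt_of_le_of_lt hab (by linarith))
  rw [key, key] at this
  exact this.le

/-- Uniform-continuity modulus for a continuous map on a compact metric space. -/
lemma exists_fwd_modulus {A : Type u} {B : Type v} [MetricSpace A] [CompactSpace A]
    [MetricSpace B] {f : A → B} (hf : Continuous f) :
    ∀ ε > (0:ℝ), ∃ η > (0:ℝ), ∀ a b : A, dist a b ≤ η → dist (f a) (f b) ≤ ε := by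
  have hu := CompactSpace.uniformContinuous_of_continuous hf
  rw [Metric.uniformContinuous_iff] at hu
  intro ε hε
  obtain ⟨δ, hδ0, hδ⟩ := hu ε hε
  exact ⟨δ/2, by linarith, fun a b hab => (hδ (lt_of_le_of_lt hab (by linarith))).le⟩

/-- Eventual containment for decreasing sequences of compact sets. -/
lemma eventually_subset_of_iInter_subset {Z : Type v} [TopologicalSpace Z] [CompactSpace Z]
    (Yn : ℕ → Set Z) (hcl : ∀ n, IsClosed (Yn n)) (hanti : Antitone Yn)
    {U : Set Z} (hU : IsOpen U) (hsub : (⋂ n, Yn n) ⊆ U) : ∃ N, Yn N ⊆ U := by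
  by_contra hc
  push_neg at hc
  have hne : ∀ n, (Yn n \ U).Nonempty := fun n => Set.not_subset.mp (hc n)
  have hdir : Directed (· ⊇ ·) fun n => Yn n \ U := fun m n =>
    ⟨max m n, Set.diff_subset_diff_left (hanti (le_max_left m n)),
      Set.diff_subset_diff_left (hanti (le_max_right m n))⟩
  obtain ⟨z, hz⟩ := IsCompact.nonempty_iInter_of_directed_nonempty_isCompact_isClosed
    (fun n => Yn n \ U) hdir hne
    (fun n => ((hcl n).inter hU.isClosed_compl).isCompact)
    (fun n => (hcl n).inter hU.isClosed_compl)
  simp only [Set.mem_iInter, Set.mem_diff] at hz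
  exact (hz 0).2 (hsub (Set.mem_iInter.mpr fun n => (hz n).1))

/-- The approximate pointed extension property. -/
def ApproxPtdExt (X : Type u) [MetricSpace X] (x₀ : X) : Prop :=
  ∀ (Z : Type v) [TopologicalSpace Z] [CompactSpace Z]
    [TopologicalSpace.MetrizableSpace Z] [Nonempty Z] (Y : Set Z), IsClosed Y →
    ∀ y₀ ∈ Y,
    ∀ Yn : ℕ → Set Z, (∀ n, IsClosed (Yn n)) → (∀ n, Yn (n + 1) ⊆ Yn n) →
      (⋂ n, Yn n) = Y →
      ∀ lam : Z → X, ContinuousOn lam Y → lam y₀ = x₀ →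
        ∃ l : ℕ → Z → X,
          (∀ n, ContinuousOn (l n) (Yn n)) ∧
          (∀ n, l n y₀ = lam y₀) ∧
          ∀ ε > (0 : ℝ), ∃ N : ℕ, ∀ n ≥ N, ∀ y ∈ Y, dist (l n y) (lam y) ≤ ε

lemma paanr_forward {X : Type u} [MetricSpace X] [CompactSpace X] [Nonempty X] {x₀ : X}
    (hP : IsPAANR.{u, w} X x₀) : ApproxPtdExt.{u, v} X x₀ := by
  classical
  intro Z _ _ _ _ Y hYcl y₀ hy₀ Yn hYncl hYndec hYinter lam hlamcont hlam0
  haveI : NormalSpace Z := by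
    letI : MetricSpace Z := TopologicalSpace.metrizableSpaceMetric Z
    infer_instance
  obtain ⟨e, he⟩ := exists_embedding_hilbertCube X
  letI : MetricSpace (ℕ → Set.Icc (0:ℝ) 1) := TopologicalSpace.metrizableSpaceMetric _
  set W' := ULift.{w} (ℕ → Set.Icc (0:ℝ) 1) with hW'
  let θ' : X → W' := fun x => ULift.up (e x)
  have hθ' : IsEmbedding θ' := Homeomorph.ulift.symm.isEmbedding.comp he
  have hanti : Antitone Yn := antitone_nat_of_succ_le fun n => hYndec n
  have Hη : ∀ k : ℕ, ∃ η > (0:ℝ), ∀ a b : X,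
      dist (θ' a) (θ' b) ≤ η → dist a b ≤ 1/((k:ℝ)+1) := fun k =>
    exists_inv_modulus hθ' (1/((k:ℝ)+1)) (by positivity)
  choose η hηpos hη using Hη
  have HP : ∀ k : ℕ, ∃ δ > (0:ℝ), ∃ r : W' → X,
      ContinuousOn r {w | Metric.infDist w (Set.range θ') ≤ δ} ∧
      r (θ' x₀) = x₀ ∧ ∀ x : X, dist (θ' (r (θ' x))) (θ' x) ≤ η k := fun k =>
    hP W' θ' hθ' (η k) (hηpos k)
  choose δ hδ r hrc hr0 hrd using HP
  let f : C(Y, ℕ → Set.Icc (0:ℝ) 1) := ⟨fun y => e (lam y), he.continuous.comp hlamcont.restrict⟩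
  obtain ⟨g, hg⟩ := f.exists_restrict_eq hYcl
  let Λ : Z → W' := fun z => ULift.up (g z)
  have hΛcont : Continuous Λ := Homeomorph.ulift.symm.continuous.comp g.continuous
  have hΛY : ∀ y ∈ Y, Λ y = θ' (lam y) := by
    intro y hy
    have h1 := ContinuousMap.congr_fun hg ⟨y, hy⟩
    have h2 : g y = e (lam y) := h1
    simp only [Λ, θ', h2]
  have HN : ∀ k, ∃ N, Yn N ⊆ {z | Metric.infDist (Λ z) (Set.range θ') < δ k} := by
    intro k
    refine eventually_subset_of_iInter_subset Yn hYncl hanti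
      (isOpen_lt ((Metric.continuous_infDist_pt _).comp hΛcont) continuous_const) ?_
    rw [hYinter]
    intro y hy
    simp only [Set.mem_setOf_eq, hΛY y hy]
    rw [Metric.infDist_zero_of_mem (Set.mem_range_self _)]
    exact hδ k
  choose N hN using HN
  set M : ℕ → ℕ := fun k => (Finset.range (k+1)).sup N + k with hM
  have hNM : ∀ k, N k ≤ M k := fun k =>
    le_trans (Finset.le_sup (Finset.self_mem_range_succ k)) (Nat.le_add_right _ _)
  have hkM : ∀ k, k ≤ M k := fun k => Nat.le_add_left k _
  have hMmono : Monotone M := fun a b hab =>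
    add_le_add (Finset.sup_mono (Finset.range_subset_range.mpr (by omega))) hab
  refine ⟨fun n => if M 0 ≤ n then
      fun z => r (Nat.findGreatest (fun k => M k ≤ n) n) (Λ z) else fun _ => x₀,
    ?_, ?_, ?_⟩
  · intro n
    by_cases h : M 0 ≤ n
    · simp only [if_pos h]
      set k := Nat.findGreatest (fun k => M k ≤ n) n with hk
      have hkn : M k ≤ n := Nat.findGreatest_spec (P := fun k => M k ≤ n) (n := n) (m := 0) (Nat.zero_le n) h
      refine (hrc k).comp hΛcont.continuousOn (fun z hz => ?_)
      have h3 : Metric.infDist (Λ z) (Set.range θ') < δ k :=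
        hN k (hanti (le_trans (hNM k) hkn) hz)
      exact h3.le
    · simp only [if_neg h]
      exact continuousOn_const
  · intro n
    by_cases h : M 0 ≤ n
    · simp only [if_pos h]
      rw [hΛY y₀ hy₀, hlam0, hr0]
    · simp only [if_neg h]
      rw [hlam0]
  · intro ε hε
    obtain ⟨K, hK⟩ := exists_nat_one_div_le' hε
    refine ⟨M K, fun n hn y hy => ?_⟩
    have h0 : M 0 ≤ n := le_trans (hMmono (Nat.zero_le K)) hn
    simp only [if_pos h0]
    set k := Nat.findGreatest (fun k => M k ≤ n) n with hk
    have hkK : K ≤ k := Nat.le_findGreatest (le_trans (hkM K) hn) hn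
    rw [hΛY y hy]
    have hdist : dist (r k (θ' (lam y))) (lam y) ≤ 1/((k:ℝ)+1) :=
      hη k _ _ (hrd k (lam y))
    refine le_trans hdist (le_trans ?_ hK)
    apply one_div_le_one_div_of_le (by positivity)
    have : (K:ℝ) ≤ (k:ℝ) := Nat.cast_le.mpr hkK
    linarith

lemma paanr_backward {X : Type u} [MetricSpace X] [CompactSpace X] [Nonempty X] {x₀ : X}
    (H : ApproxPtdExt.{u, v} X x₀) : IsPAANR.{u, w} X x₀ := by
  classical
  intro Y' _ _ θ hθ ε hε
  haveI : Nonempty Y' := ⟨θ (Classical.arbitrary X)⟩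
  obtain ⟨ψ, hψ⟩ := exists_embedding_hilbertCube Y'
  letI : MetricSpace (ℕ → Set.Icc (0:ℝ) 1) := TopologicalSpace.metrizableSpaceMetric _
  set Z := ULift.{v} (ℕ → Set.Icc (0:ℝ) 1) with hZ
  let φ : Y' → Z := fun y => ULift.up (ψ y)
  have hφ : IsEmbedding φ := Homeomorph.ulift.symm.isEmbedding.comp hψ
  let θ'' : X → Z := fun x => φ (θ x)
  have hθ'' : IsEmbedding θ'' := hφ.comp hθ
  haveI : Nonempty Z := ⟨θ'' (Classical.arbitrary X)⟩
  have hYcl : IsClosed (Set.range θ'') := (isCompact_range hθ''.continuous).isClosed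
  set Yn : ℕ → Set Z := fun n => {z | Metric.infDist z (Set.range θ'') ≤ 1/((n:ℝ)+1)} with hYn
  have hYncl : ∀ n, IsClosed (Yn n) := fun n =>
    isClosed_le (Metric.continuous_infDist_pt _) continuous_const
  have hYndec : ∀ n, Yn (n+1) ⊆ Yn n := by
    intro n z hz
    simp only [hYn, Set.mem_setOf_eq] at hz ⊢
    refine le_trans hz ?_
    apply one_div_le_one_div_of_le (by positivity)
    push_cast; linarith
  have hiInter : (⋂ n, Yn n) = Set.range θ'' := by
    ext z
    simp only [Set.mem_iInter, hYn, Set.mem_setOf_eq]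
    constructor
    · intro h
      have h0 : Metric.infDist z (Set.range θ'') ≤ 0 := by
        by_contra hpos
        push_neg at hpos
        obtain ⟨K, hK⟩ := exists_nat_one_div_le' (half_pos hpos)
        have := h K
        linarith
      have h0' : Metric.infDist z (Set.range θ'') = 0 :=
        le_antisymm h0 Metric.infDist_nonneg
      exact (hYcl.mem_iff_infDist_zero ⟨θ'' (Classical.arbitrary X),
        Set.mem_range_self _⟩).mpr h0'
    · intro h n
      rw [Metric.infDist_zero_of_mem h]
      positivity
  set lam : Z → X := Function.invFun θ'' with hlamdef
  have hlaminv : ∀ x, lam (θ'' x) = x := fun x =>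
    Function.leftInverse_invFun hθ''.injective x
  have hlamcont : ContinuousOn lam (Set.range θ'') := by
    rw [continuousOn_iff_continuous_restrict]
    have heq : Set.domRestrict (Set.range θ'') lam =
        fun y => (hθ''.toHomeomorph).symm y := by
      funext y
      apply hθ''.injective
      have h1 : θ'' (lam ↑y) = ↑y := Function.invFun_eq y.2
      have h2 : θ'' ((hθ''.toHomeomorph).symm y) = ↑y := by
        have := (hθ''.toHomeomorph).apply_symm_apply y
        exact congrArg Subtype.val this
      rw [Set.restrict_apply, h1, h2]
    rw [heq]
    exact (hθ''.toHomeomorph).symm.continuous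
  obtain ⟨l, hlc, hl0, hconv⟩ := H Z (Set.range θ'') hYcl (θ'' x₀) (Set.mem_range_self _)
    Yn hYncl hYndec hiInter lam hlamcont (hlaminv x₀)
  -- modulus for θ
  obtain ⟨ηd, hηd, hηd'⟩ := exists_fwd_modulus hθ.continuous ε hε
  obtain ⟨NN, hNN⟩ := hconv ηd hηd
  -- modulus for φ
  obtain ⟨δ₁, hδ₁, hδ₁'⟩ := exists_fwd_modulus hφ.continuous (1/((NN:ℝ)+1)) (by positivity)
  refine ⟨δ₁, hδ₁, fun y => l NN (φ y), ?_, ?_, ?_⟩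
  · refine (hlc NN).comp hφ.continuous.continuousOn (fun y hy => ?_)
    simp only [Set.mem_setOf_eq] at hy
    obtain ⟨a, haR, had⟩ := (isCompact_range hθ.continuous).exists_infDist_eq_dist
      ⟨θ x₀, Set.mem_range_self _⟩ y
    have h1 : dist y a ≤ δ₁ := by rw [← had]; linarith
    have h2 : dist (φ y) (φ a) ≤ 1/((NN:ℝ)+1) := hδ₁' y a h1
    obtain ⟨x, rfl⟩ := haR
    have hmem : φ (θ x) ∈ Set.range θ'' := ⟨x, rfl⟩
    simp only [hYn, Set.mem_setOf_eq]
    exact le_trans (Metric.infDist_le_dist_of_mem hmem) h2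
  · have := hl0 NN
    rw [hlaminv x₀] at this
    exact this
  · intro x
    have hx := hNN NN le_rfl (θ'' x) (Set.mem_range_self x)
    rw [hlaminv x] at hx
    exact hηd' _ _ hx

/-- A pointed compactum `(X, x₀)` is a PAANR if and only if: for every compactum `Z`,
every closed subset `Y ⊆ Z`, every `y₀ ∈ Y`, every decreasing sequence `Y₁ ⊇ Y₂ ⊇ ⋯` of
closed subsets of `Z` with `⋂ n, Yₙ = Y`, and every continuous `λ : Y → X` with
`λ y₀ = x₀`, there is a sequence of continuous maps `λₙ : Yₙ → X` with `λₙ y₀ = λ y₀` for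
every `n` and `λₙ y → λ y` uniformly over `y ∈ Y` (with respect to a chosen compatible
metric on `X`). -/
theorem paanr_iff_approximate_pointed_extension_property
    (X : Type u) [MetricSpace X] [CompactSpace X] [Nonempty X] (x₀ : X) :
    IsPAANR X x₀ ↔
      ∀ (Z : Type v) [TopologicalSpace Z] [CompactSpace Z]
        [TopologicalSpace.MetrizableSpace Z] [Nonempty Z] (Y : Set Z), IsClosed Y →
        ∀ y₀ ∈ Y,
        ∀ Yn : ℕ → Set Z, (∀ n, IsClosed (Yn n)) → (∀ n, Yn (n + 1) ⊆ Yn n) →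
          (⋂ n, Yn n) = Y →
          ∀ lam : Z → X, ContinuousOn lam Y → lam y₀ = x₀ →
            ∃ l : ℕ → Z → X,
              (∀ n, ContinuousOn (l n) (Yn n)) ∧
              (∀ n, l n y₀ = lam y₀) ∧
              ∀ ε > (0 : ℝ), ∃ N : ℕ, ∀ n ≥ N, ∀ y ∈ Y, dist (l n y) (lam y) ≤ ε :=
  ⟨fun h => paanr_forward h, fun h => paanr_backward h⟩
end

section
/- Let X = ({0} × [−1,1]) ∪ {(t, sin(1/t)) : t ∈ (0,1]} ⊆ ℝ² be the topologist's sine curve and let x₁ = (1, sin 1) be the free endpoint of the oscillating arc. Then the pointed compactum (X, x₁) is a PAANR. -/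
open Topology

universe u v

/-- The topologist's sine curve
`({0} × [−1,1]) ∪ {(t, sin(1/t)) : t ∈ (0,1]} ⊆ ℝ²`. -/
noncomputable def sineCurve : Set (ℝ × ℝ) :=
  {p : ℝ × ℝ | p.1 = 0 ∧ p.2 ∈ Set.Icc (-1 : ℝ) 1} ∪
    {p : ℝ × ℝ | ∃ t : ℝ, 0 < t ∧ t ≤ 1 ∧ p = (t, Real.sin (1 / t))}

/-- The free endpoint `x₁ = (1, sin 1)` of the oscillating arc of the topologist's
sine curve. -/
noncomputable def sineCurveEndpoint : ↥sineCurve :=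
  ⟨(1, Real.sin 1), Or.inr ⟨1, one_pos, le_rfl, by norm_num⟩⟩

lemma sineCurve_isCompact' : IsCompact sineCurve := by
  have hS : IsClosed {p : ℝ × ℝ | p.1 ≤ 0 ∨ p.2 = Real.sin (1 / p.1)} := by
    rw [← isOpen_compl_iff]
    rw [isOpen_iff_mem_nhds]
    intro p hp
    simp only [Set.mem_compl_iff, Set.mem_setOf_eq, not_or] at hp
    obtain ⟨hp1, hp2⟩ := hp
    push_neg at hp1
    have hca : ContinuousAt (fun q : ℝ × ℝ => q.2 - Real.sin (1 / q.1)) p := by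
      apply ContinuousAt.sub continuousAt_snd
      exact Real.continuous_sin.continuousAt.comp
        (ContinuousAt.div continuousAt_const continuousAt_fst hp1.ne')
    have h1 : ∀ᶠ q : ℝ × ℝ in 𝓝 p, q.2 - Real.sin (1 / q.1) ≠ 0 :=
      hca.eventually_ne (sub_ne_zero.mpr hp2)
    have h2 : ∀ᶠ q : ℝ × ℝ in 𝓝 p, 0 < q.1 :=
      (isOpen_lt continuous_const continuous_fst).mem_nhds hp1
    filter_upwards [h1, h2] with q hq1 hq2
    simp only [Set.mem_compl_iff, Set.mem_setOf_eq, not_or]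
    exact ⟨by linarith, fun h => hq1 (by rw [h]; ring)⟩
  have heq : sineCurve = (Set.Icc (0:ℝ) 1 ×ˢ Set.Icc (-1:ℝ) 1) ∩
      {p : ℝ × ℝ | p.1 ≤ 0 ∨ p.2 = Real.sin (1 / p.1)} := by
    ext p
    constructor
    · rintro (⟨h0, hs⟩ | ⟨t, ht0, ht1, rfl⟩)
      · exact ⟨⟨by rw [h0]; exact Set.left_mem_Icc.mpr zero_le_one, hs⟩, Or.inl h0.le⟩
      · exact ⟨⟨⟨ht0.le, ht1⟩, Real.neg_one_le_sin _, Real.sin_le_one _⟩, Or.inr rfl⟩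
    · rintro ⟨⟨⟨h1a, h1b⟩, h2⟩, hS | hS⟩
      · exact Or.inl ⟨le_antisymm hS h1a, h2⟩
      · rcases eq_or_lt_of_le h1a with h0 | h0
        · exact Or.inl ⟨h0.symm, h2⟩
        · exact Or.inr ⟨p.1, h0, h1b, Prod.ext rfl hS⟩
  rw [heq]
  exact (isCompact_Icc.prod isCompact_Icc).inter_right hS

open Real in
/-- The topologist's sine curve, pointed at the free endpoint `x₁ = (1, sin 1)` of the
oscillating arc, is a PAANR. -/
theorem sineCurve_isPAANR_endpoint : IsPAANR ↥sineCurve sineCurveEndpoint := by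
  intro Y _ _ θ hθ ε hε
  haveI : CompactSpace ↥sineCurve := isCompact_iff_compactSpace.mp sineCurve_isCompact'
  have hθu : UniformContinuous θ := CompactSpace.uniformContinuous_of_continuous hθ.continuous
  obtain ⟨δ', hδ'0, hmod⟩ := Metric.uniformContinuous_iff.mp hθu ε hε
  obtain ⟨k, hk⟩ := exists_nat_gt (max (1 / δ') 1)
  have hπ := Real.pi_gt_three
  have hk1 : (1 : ℝ) ≤ k := le_of_lt (lt_of_le_of_lt (le_max_right _ _) hk)
  set c : ℝ := 2 * k * π + π with hc
  -- denominator bounds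
  have hD : ∀ s : ℝ, 1 + π / 2 ≤ c - Real.arcsin s := by
    intro s
    have h1 := Real.arcsin_le_pi_div_two s
    nlinarith
  have hDpos : ∀ s : ℝ, 0 < c - Real.arcsin s := fun s => by nlinarith [hD s]
  set σ : ℝ → ℝ := fun s => 1 / (c - Real.arcsin s) with hσ
  have hσpos : ∀ s : ℝ, 0 < σ s := fun s => div_pos one_pos (hDpos s)
  have hσ1 : ∀ s : ℝ, σ s ≤ 1 := by
    intro s
    have := hD s
    rw [hσ, div_le_one (hDpos s)]
    nlinarith
  have hσb : ∀ s : ℝ, σ s < δ' := by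
    intro s
    have h2 : (1 : ℝ) / δ' < k := lt_of_le_of_lt (le_max_left _ _) hk
    rw [div_lt_iff₀ hδ'0] at h2
    have h3 := Real.arcsin_le_pi_div_two s
    rw [hσ, div_lt_iff₀ (hDpos s)]
    nlinarith
  -- key sine identity
  have hsin : ∀ s : ℝ, s ∈ Set.Icc (-1 : ℝ) 1 → Real.sin (1 / σ s) = s := by
    intro s hs
    rw [hσ]
    rw [one_div_one_div]
    have he : c - Real.arcsin s = (π - Real.arcsin s) + (k : ℕ) * (2 * π) := by
      rw [hc]; ring
    rw [he, Real.sin_add_nat_mul_two_pi, Real.sin_pi_sub,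
      Real.sin_arcsin hs.1 hs.2]
  -- the approximate retraction on the curve, as a function on the plane
  set a : ℝ := 1 / (c + π / 2) with ha
  have hapos : 0 < a := by
    rw [ha]; positivity
  have haσ : ∀ s : ℝ, a ≤ σ s := by
    intro s
    have h1 := Real.neg_pi_div_two_le_arcsin s
    have h2 : c - Real.arcsin s ≤ c + π / 2 := by linarith
    exact one_div_le_one_div_of_le (hDpos s) h2
  set hfun : ℝ × ℝ → ℝ := fun p => max (min p.1 1) (σ p.2) with hhfun
  have hfub : ∀ p : ℝ × ℝ, hfun p ≤ 1 := fun p =>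
    max_le (min_le_right _ _) (hσ1 _)
  have hflb : ∀ p : ℝ × ℝ, a ≤ hfun p := fun p =>
    le_trans (haσ _) (le_max_right _ _)
  have hσcont : Continuous σ := by
    apply continuous_const.div (continuous_const.sub Real.continuous_arcsin)
    exact fun s => (hDpos s).ne'
  have hfcont : Continuous hfun :=
    (continuous_fst.min continuous_const).max (hσcont.comp continuous_snd)
  -- Tietze extension of hfun ∘ θ⁻¹
  set e : ↥sineCurve ≃ₜ Set.range θ := hθ.toHomeomorph with he
  have hrange_closed : IsClosed (Set.range θ) := (isCompact_range hθ.continuous).isClosed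
  set F : C(Set.range θ, ℝ) :=
    ⟨fun y => hfun ((e.symm y : ↥sineCurve) : ℝ × ℝ),
      (hfcont.comp continuous_subtype_val).comp e.symm.continuous⟩ with hF
  obtain ⟨G, hG⟩ := F.exists_restrict_eq hrange_closed
  have hGθ : ∀ x : ↥sineCurve, G (θ x) = hfun (x : ℝ × ℝ) := by
    intro x
    have h1 := DFunLike.congr_fun hG ⟨θ x, Set.mem_range_self x⟩
    simp only [ContinuousMap.restrict_apply, hF, ContinuousMap.coe_mk] at h1
    rw [h1]
    congr 1
    have : e x = ⟨θ x, Set.mem_range_self x⟩ := rfl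
    rw [← this, Homeomorph.symm_apply_apply]
  -- the clamped value function
  set v : Y → ℝ := fun y => max a (min 1 (G y)) with hv
  have hvpos : ∀ y, 0 < v y := fun y => lt_of_lt_of_le hapos (le_max_left _ _)
  have hvle : ∀ y, v y ≤ 1 := by
    intro y
    apply max_le _ (min_le_left _ _)
    calc a ≤ σ 0 := haσ 0
    _ ≤ 1 := hσ1 0
  set r : Y → ↥sineCurve := fun y =>
    ⟨(v y, Real.sin (1 / v y)), Or.inr ⟨v y, hvpos y, hvle y, rfl⟩⟩ with hr
  have hvcont : Continuous v := continuous_const.max (continuous_const.min G.continuous)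
  have hrcont : Continuous r := by
    apply Continuous.subtype_mk
    exact hvcont.prodMk (Real.continuous_sin.comp
      (continuous_const.div hvcont (fun y => (hvpos y).ne')))
  have hvθ : ∀ x : ↥sineCurve, v (θ x) = hfun (x : ℝ × ℝ) := by
    intro x
    rw [hv]
    simp only [hGθ x]
    rw [min_eq_right (hfub _), max_eq_right (hflb _)]
  refine ⟨1, one_pos, r, hrcont.continuousOn, ?_, ?_⟩
  · -- basepoint
    have hv1 : v (θ sineCurveEndpoint) = 1 := by
      rw [hvθ]
      show max (min (1:ℝ) 1) (σ (Real.sin 1)) = 1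
      rw [min_self, max_eq_left (hσ1 _)]
    apply Subtype.ext
    show (v (θ sineCurveEndpoint), Real.sin (1 / v (θ sineCurveEndpoint)))
      = ((1 : ℝ), Real.sin 1)
    rw [hv1]; norm_num
  · -- closeness
    intro x
    refine le_of_lt (hmod ?_)
    rw [Subtype.dist_eq]
    have hrval : (r (θ x) : ℝ × ℝ) = (hfun (x : ℝ × ℝ), Real.sin (1 / hfun (x : ℝ × ℝ))) := by
      show ((v (θ x), Real.sin (1 / v (θ x))) : ℝ × ℝ) = _
      rw [hvθ]
    rw [hrval]
    rcases x.2 with ⟨h0, hs⟩ | ⟨t, ht0, ht1, hpt⟩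
    · -- segment point
      have h1 : hfun (x : ℝ × ℝ) = σ (x : ℝ × ℝ).2 := by
        rw [hhfun]
        simp only [h0]
        rw [min_eq_left zero_le_one, max_eq_right (hσpos _).le]
      rw [h1, hsin _ hs]
      have h2 : ((x : ℝ × ℝ).1 = 0) := h0
      rw [Prod.dist_eq]
      simp only [h2, dist_self]
      rw [Real.dist_eq, sub_zero, abs_of_pos (hσpos _)]
      rw [max_eq_left (hσpos _).le]
      exact hσb _
    · -- arc point
      have h1 : (x : ℝ × ℝ).1 = t := by rw [hpt]
      have h2 : (x : ℝ × ℝ).2 = Real.sin (1 / t) := by rw [hpt]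
      set s := Real.sin (1 / t) with hsdef
      have hsIcc : s ∈ Set.Icc (-1 : ℝ) 1 := ⟨Real.neg_one_le_sin _, Real.sin_le_one _⟩
      have hmin : min (x : ℝ × ℝ).1 1 = t := by rw [h1, min_eq_left ht1]
      rcases le_total (σ s) t with hle | hle
      · have h3 : hfun (x : ℝ × ℝ) = t := by
          rw [hhfun]; simp only [hmin, h2, ← hsdef]
          exact max_eq_left hle
        rw [h3]
        have : ((t, Real.sin (1 / t)) : ℝ × ℝ) = (x : ℝ × ℝ) := hpt.symm
        rw [this, dist_self]
        exact hδ'0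
      · have h3 : hfun (x : ℝ × ℝ) = σ s := by
          rw [hhfun]; simp only [hmin, h2, ← hsdef]
          exact max_eq_right hle
        rw [h3, hsin _ hsIcc]
        rw [Prod.dist_eq, h1, h2]
        show dist (σ s) t ⊔ dist s s < δ'
        rw [dist_self, Real.dist_eq, abs_of_nonneg (by linarith)]
        rw [max_eq_left (by linarith [hσpos s] : (0:ℝ) ≤ σ s - t)]
        have := hσb s
        linarith [ht0]
end

section
/- Let (X, x₀) be a pointed compactum. Then X is an AANR if and only if the following holds: for every compactum Z, every closed subset Y ⊆ Z, every point y₀ that is an isolated point of Y, every decreasing sequence Y₁ ⊇ Y₂ ⊇ ⋯ of closed subsets of Z with ⋂ₙ Yₙ = Y, and every continuous function λ : Y → X with λ(y₀) = x₀, there exists a sequence of continuous functions λₙ : Yₙ → X such that λₙ(y₀) = λ(y₀) for every n and λₙ(y) → λ(y) uniformly over y ∈ Y. -/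
open Topology

universe u v

/-- A compactum `X` is an *approximative absolute neighborhood retract* (AANR). -/
def IsAANR (X : Type u) [TopologicalSpace X] : Prop :=
  ∀ (Y : Type v) [MetricSpace Y] [CompactSpace Y] (θ : X → Y),
    IsEmbedding θ →
    ∀ ε > (0 : ℝ), ∃ δ > (0 : ℝ), ∃ r : Y → X,
      ContinuousOn r {y | Metric.infDist y (Set.range θ) ≤ δ} ∧
      ∀ x : X, dist (θ (r (θ x))) (θ x) ≤ ε

section Aux

open Metric Set

universe w

instance : TietzeExtension.{w} unitInterval :=
  .of_retract ⟨Subtype.val, continuous_subtype_val⟩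
    ⟨Set.projIcc 0 1 zero_le_one, continuous_projIcc⟩ (by ext x; simp)

/-- On a compact space, a continuous injection is "uniformly injective". -/
private lemma aanr_unif_inj {X : Type*} {Y : Type*} [MetricSpace X] [CompactSpace X]
    [MetricSpace Y] {θ : X → Y} (hc : Continuous θ) (hi : Function.Injective θ)
    {ε : ℝ} (hε : 0 < ε) :
    ∃ ε' > (0 : ℝ), ∀ a b : X, dist (θ a) (θ b) ≤ ε' → dist a b ≤ ε := by
  set K : Set (X × X) := {p | ε ≤ dist p.1 p.2} with hK
  have hKc : IsCompact K :=
    (isClosed_le continuous_const (continuous_fst.dist continuous_snd)).isCompact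
  rcases K.eq_empty_or_nonempty with hKe | hKne
  · refine ⟨1, one_pos, fun a b _ => ?_⟩
    by_contra h
    have : (a, b) ∈ K := le_of_lt (not_le.mp h)
    simp [hKe] at this
  · obtain ⟨p₀, hp₀, hmin⟩ := hKc.exists_isMinOn hKne
      ((hc.comp continuous_fst).dist (hc.comp continuous_snd)).continuousOn
    have hne : θ p₀.1 ≠ θ p₀.2 := by
      intro h
      have : p₀.1 = p₀.2 := hi h
      have h2 : ε ≤ dist p₀.1 p₀.2 := hp₀
      rw [this] at h2; simp at h2; linarith
    have hdpos : 0 < dist (θ p₀.1) (θ p₀.2) := dist_pos.mpr hne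
    refine ⟨dist (θ p₀.1) (θ p₀.2) / 2, by positivity, fun a b hab => ?_⟩
    by_contra h
    have hmem : (a, b) ∈ K := le_of_lt (not_le.mp h)
    have := hmin hmem
    simp only [] at this
    have : dist (θ p₀.1) (θ p₀.2) ≤ dist (θ a) (θ b) := this
    linarith
  
/-- On a compact space, continuity gives this `≤`-form of uniform continuity. -/
private lemma aanr_unif_cont {X : Type*} {Y : Type*} [MetricSpace X] [CompactSpace X]
    [PseudoMetricSpace Y] {θ : X → Y} (hc : Continuous θ) {ε : ℝ} (hε : 0 < ε) :
    ∃ ε' > (0 : ℝ), ∀ a b : X, dist a b ≤ ε' → dist (θ a) (θ b) ≤ ε := by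
  have h := CompactSpace.uniformContinuous_of_continuous hc
  rw [Metric.uniformContinuous_iff] at h
  obtain ⟨δ, hδ, H⟩ := h ε hε
  exact ⟨δ / 2, by positivity, fun a b hab => (H (lt_of_le_of_lt hab (by linarith))).le⟩

/-- Every compact metric space admits a continuous injection into the Hilbert cube. -/
private lemma aanr_exists_cube_emb (W : Type*) [MetricSpace W] [CompactSpace W] [Nonempty W] :
    ∃ F : W → (ℕ → unitInterval), Continuous F ∧ Function.Injective F := by
  obtain ⟨usq, husq⟩ := TopologicalSpace.exists_dense_seq W
  refine ⟨fun x k => ⟨min 1 (dist x (usq k)), ⟨le_min zero_le_one dist_nonneg,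
    min_le_left _ _⟩⟩, ?_, ?_⟩
  · exact continuous_pi fun k =>
      Continuous.subtype_mk (continuous_const.min ((continuous_id.dist continuous_const))) _
  · intro a b hab
    by_contra hne
    have hd : 0 < dist a b := dist_pos.mpr hne
    obtain ⟨k, hk⟩ := (Metric.denseRange_iff.mp husq) a (min (dist a b / 4) (1 / 2))
      (by positivity)
    have h1 : dist a (usq k) < 1 :=
      lt_of_lt_of_le hk (le_trans (min_le_right _ _) (by norm_num))
    have e2v : min 1 (dist a (usq k)) = min 1 (dist b (usq k)) :=
      congrArg Subtype.val (congrFun hab k)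
    rw [min_eq_right h1.le] at e2v
    have h4 : dist b (usq k) ≤ dist a (usq k) := by
      by_cases hc1 : dist b (usq k) ≤ 1
      · rw [min_eq_right hc1] at e2v; exact e2v.ge
      · exfalso
        rw [min_eq_left (le_of_not_ge hc1)] at e2v
        linarith
    have htri : dist a b ≤ dist a (usq k) + dist (usq k) b := dist_triangle _ _ _
    rw [dist_comm (usq k) b] at htri
    have hk' : dist a (usq k) < dist a b / 4 := lt_of_lt_of_le hk (min_le_left _ _)
    linarith

end Aux

section Main

open Metric Set

universe w

private lemma aanr_forward {X : Type u} [MetricSpace X] [CompactSpace X] [Nonempty X]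
    (x₀ : X) (hA : IsAANR.{u, w} X) :
    ∀ (Z : Type v) [TopologicalSpace Z] [CompactSpace Z]
        [TopologicalSpace.MetrizableSpace Z] [Nonempty Z] (Y : Set Z), IsClosed Y →
        ∀ y₀ ∈ Y, (∃ U : Set Z, IsOpen U ∧ U ∩ Y = {y₀}) →
        ∀ Yn : ℕ → Set Z, (∀ n, IsClosed (Yn n)) → (∀ n, Yn (n + 1) ⊆ Yn n) →
          (⋂ n, Yn n) = Y →
          ∀ lam : Z → X, ContinuousOn lam Y → lam y₀ = x₀ →
            ∃ l : ℕ → Z → X,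
              (∀ n, ContinuousOn (l n) (Yn n)) ∧
              (∀ n, l n y₀ = lam y₀) ∧
              ∀ ε > (0 : ℝ), ∃ N : ℕ, ∀ n ≥ N, ∀ y ∈ Y, dist (l n y) (lam y) ≤ ε := by
  intro Z _ _ _ _ Y hYcl y₀ hy₀ hiso Yn hYncl hYndec hYnint lam hlam hlam0
  classical
  obtain ⟨U, hUo, hUY⟩ := hiso
  letI : MetricSpace Z := TopologicalSpace.metrizableSpaceMetric Z
  have hy₀U : y₀ ∈ U := by
    have : y₀ ∈ ({y₀} : Set Z) := rfl
    rw [← hUY] at this; exact this.1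
  have hmono : Antitone Yn := antitone_nat_of_succ_le hYndec
  have hYnc : ∀ n, IsCompact (Yn n) := fun n => (hYncl n).isCompact
  -- a dense sequence and the embedding into the Hilbert cube
  obtain ⟨usq, husq⟩ := TopologicalSpace.exists_dense_seq X
  set F : X → (ℕ → unitInterval) := fun x k =>
    ⟨min 1 (dist x (usq k)), ⟨le_min zero_le_one dist_nonneg, min_le_left _ _⟩⟩ with hFdef
  have hFcont : Continuous F := continuous_pi fun k =>
    Continuous.subtype_mk (continuous_const.min ((continuous_id.dist continuous_const))) _
  have hFinj : Function.Injective F := by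
    intro a b hab
    by_contra hne
    have hd : 0 < dist a b := dist_pos.mpr hne
    obtain ⟨k, hk⟩ := (Metric.denseRange_iff.mp husq) a (min (dist a b / 4) (1 / 2))
      (by positivity)
    have h1 : dist a (usq k) < 1 :=
      lt_of_lt_of_le hk (le_trans (min_le_right _ _) (by norm_num))
    have e2v : min 1 (dist a (usq k)) = min 1 (dist b (usq k)) :=
      congrArg Subtype.val (congrFun hab k)
    rw [min_eq_right h1.le] at e2v
    have h4 : dist b (usq k) ≤ dist a (usq k) := by
      by_cases hc1 : dist b (usq k) ≤ 1
      · rw [min_eq_right hc1] at e2v; exact e2v.ge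
      · exfalso
        rw [min_eq_left (le_of_not_ge hc1)] at e2v
        linarith
    have htri : dist a b ≤ dist a (usq k) + dist (usq k) b := dist_triangle _ _ _
    rw [dist_comm (usq k) b] at htri
    have hk' : dist a (usq k) < dist a b / 4 := lt_of_lt_of_le hk (min_le_left _ _)
    linarith
  letI : MetricSpace (ℕ → unitInterval) :=
    TopologicalSpace.metrizableSpaceMetric (ℕ → unitInterval)
  haveI : CompactSpace (ULift.{w} (ℕ → unitInterval)) := Homeomorph.ulift.symm.compactSpace
  set θ : X → ULift.{w} (ℕ → unitInterval) := fun x => ULift.up (F x) with hθdef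
  have hθc : Continuous θ := continuous_uliftUp.comp hFcont
  have hθinj : Function.Injective θ := fun a b h => hFinj (congrArg ULift.down h)
  have hθe : IsEmbedding θ := (hθc.isClosedEmbedding hθinj).toIsEmbedding
  -- Tietze extension of F ∘ lam
  obtain ⟨g, hgres⟩ := ContinuousMap.exists_restrict_eq (s := Y) hYcl
    (⟨fun y => F (lam y), hFcont.comp hlam.restrict⟩ : C(Y, ℕ → unitInterval))
  have hg : ∀ y ∈ Y, g y = F (lam y) := by
    intro y hy
    have := congrFun (congrArg DFunLike.coe hgres) ⟨y, hy⟩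
    simpa using this
  -- separating the isolated point
  obtain ⟨O₁', O₂, hO₁'o, hO₂o, hsub1, hsub2, hdisj⟩ :=
    NormalSpace.normal ({y₀} : Set Z) (Y \ U) isClosed_singleton (hYcl.sdiff hUo)
      (by
        rw [Set.disjoint_left]
        rintro z rfl hz
        exact hz.2 hy₀U)
  set O₁ : Set Z := O₁' ∩ U with hO₁def
  have hO₁o : IsOpen O₁ := hO₁'o.inter hUo
  have hy₀O₁ : y₀ ∈ O₁ := ⟨hsub1 rfl, hy₀U⟩
  have hYsub : Y ⊆ O₁ ∪ O₂ := by
    intro y hy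
    by_cases h : y ∈ U
    · have hmem : y ∈ U ∩ Y := ⟨h, hy⟩
      rw [hUY] at hmem
      exact Or.inl (hmem ▸ hy₀O₁)
    · exact Or.inr (hsub2 ⟨hy, h⟩)
  have hdisj' : ∀ z, z ∈ O₂ → z ∉ O₁ := fun z hz h1 =>
    Set.disjoint_left.mp hdisj h1.1 hz
  obtain ⟨N₀, hN₀⟩ := exists_subset_nhds_of_isCompact' hmono.directed_ge hYnc hYncl
    (fun x hx => (hO₁o.union hO₂o).mem_nhds (hYsub (by rwa [hYnint] at hx)))
  -- per-accuracy construction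
  have key : ∀ k : ℕ, ∃ (m : ℕ) (f : Z → X),
      (∀ n, m ≤ n → ContinuousOn f (Yn n)) ∧ f y₀ = lam y₀ ∧
      ∀ y ∈ Y, dist (f y) (lam y) ≤ 1 / (k + 1) := by
    intro k
    have hεk : (0 : ℝ) < 1 / (k + 1) := by positivity
    obtain ⟨ε', hε', hee⟩ := aanr_unif_inj hθc hθinj hεk
    obtain ⟨δ, hδ, r, hrc, hre⟩ := hA _ θ hθe ε' hε'
    set W : Set Z := (fun z => Metric.infDist (ULift.up (g z)) (Set.range θ)) ⁻¹' Set.Iio δ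
      with hWdef
    have hWo : IsOpen W := isOpen_Iio.preimage
      ((continuous_infDist_pt _).comp (continuous_uliftUp.comp g.continuous))
    have hYW : Y ⊆ W := by
      intro y hy
      show Metric.infDist _ _ < δ
      have : ULift.up.{w} (g y) = θ (lam y) := by rw [hg y hy]
      rw [this, Metric.infDist_zero_of_mem (Set.mem_range_self (lam y))]
      exact hδ
    obtain ⟨N₁, hN₁⟩ := exists_subset_nhds_of_isCompact' hmono.directed_ge hYnc hYncl
      (fun x hx => hWo.mem_nhds (hYW (by rwa [hYnint] at hx)))
    refine ⟨max N₀ N₁, fun z => if z ∈ O₁ then x₀ else r (ULift.up (g z)), ?_, ?_, ?_⟩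
    · intro n hn z hz
      have hsubO : Yn n ⊆ O₁ ∪ O₂ := (hmono (le_trans (le_max_left _ _) hn)).trans hN₀
      have hsubW : Yn n ⊆ W := (hmono (le_trans (le_max_right _ _) hn)).trans hN₁
      by_cases hzO : z ∈ O₁
      · refine ContinuousWithinAt.congr_of_eventuallyEq
          (continuousWithinAt_const (b := x₀)) ?_ ?_
        · filter_upwards [mem_nhdsWithin_of_mem_nhds (hO₁o.mem_nhds hzO)] with z' hz'
          simp [if_pos hz']
        · simp [if_pos hzO]
      · have hzO₂ : z ∈ O₂ := (hsubO hz).resolve_left hzO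
        have hcw : ContinuousWithinAt (fun z => r (ULift.up (g z))) (Yn n) z := by
          have : ContinuousOn (fun z => r (ULift.up (g z))) (Yn n) := by
            have hcomp := hrc.comp (continuous_uliftUp.comp g.continuous).continuousOn
              (fun z' hz' => show Metric.infDist ((ULift.up ∘ ⇑g) z') (Set.range θ) ≤ δ from
                le_of_lt (hsubW hz'))
            exact hcomp
          exact this z hz
        refine hcw.congr_of_eventuallyEq ?_ ?_
        · filter_upwards [mem_nhdsWithin_of_mem_nhds (hO₂o.mem_nhds hzO₂)] with z' hz'
          simp [if_neg (hdisj' z' hz')]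
        · simp [if_neg hzO]
    · simp [if_pos hy₀O₁, hlam0]
    · intro y hy
      by_cases hyO : y ∈ O₁
      · have hmem : y ∈ U ∩ Y := ⟨hyO.2, hy⟩
        rw [hUY] at hmem
        rw [Set.mem_singleton_iff] at hmem
        subst hmem
        simp only [if_pos hyO, hlam0, dist_self]
        positivity
      · have h1 : dist (r (θ (lam y))) (lam y) ≤ 1 / (k + 1) := hee _ _ (hre (lam y))
        have h2 : ULift.up.{w} (g y) = θ (lam y) := by rw [hg y hy]
        simpa [if_neg hyO, h2] using h1
  choose mfun ffun hfc hf0 hferr using key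
  set M : ℕ → ℕ := fun k => (Finset.range (k + 1)).sup mfun with hMdef
  have hmM : ∀ k, mfun k ≤ M k := fun k => Finset.le_sup (Finset.self_mem_range_succ k)
  have hMmono : Monotone M := fun a b hab =>
    Finset.sup_mono (Finset.range_subset_range.mpr (by omega))
  set l : ℕ → Z → X := fun n =>
    if h : M 0 ≤ n then ffun (Nat.findGreatest (fun k => M k ≤ n) n) else fun _ => lam y₀
    with hldef
  refine ⟨l, ?_, ?_, ?_⟩
  · intro n
    by_cases h : M 0 ≤ n
    · have hspec : M (Nat.findGreatest (fun k => M k ≤ n) n) ≤ n :=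
        Nat.findGreatest_spec (P := fun k => M k ≤ n) (Nat.zero_le n) h
      have := hfc (Nat.findGreatest (fun k => M k ≤ n) n) n (le_trans (hmM _) hspec)
      have hln : l n = ffun (Nat.findGreatest (fun k => M k ≤ n) n) := by
        simp [hldef, h]
      rw [hln]; exact this
    · have hln : l n = fun _ => lam y₀ := by simp [hldef, h]
      rw [hln]; exact continuousOn_const
  · intro n
    by_cases h : M 0 ≤ n
    · have hln : l n = ffun (Nat.findGreatest (fun k => M k ≤ n) n) := by
        simp [hldef, h]
      rw [hln]; exact hf0 _
    · have hln : l n = fun _ => lam y₀ := by simp [hldef, h]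
      rw [hln]
  · intro ε hε
    obtain ⟨k, hk⟩ := exists_nat_one_div_lt hε
    refine ⟨max (M k) k, fun n hn y hy => ?_⟩
    have h0 : M 0 ≤ n := le_trans (hMmono (Nat.zero_le k)) (le_trans (le_max_left _ _) hn)
    have hkn : k ≤ Nat.findGreatest (fun k => M k ≤ n) n :=
      Nat.le_findGreatest (le_trans (le_max_right _ _) hn)
        (le_trans (le_max_left _ _) hn)
    have hln : l n = ffun (Nat.findGreatest (fun k => M k ≤ n) n) := by
      simp [hldef, h0]
    have h1 : dist (l n y) (lam y) ≤ 1 / (↑(Nat.findGreatest (fun k => M k ≤ n) n) + 1) := by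
      rw [hln]; exact hferr (Nat.findGreatest (fun k => M k ≤ n) n) y hy
    have h2 : (1 : ℝ) / (↑(Nat.findGreatest (fun k => M k ≤ n) n) + 1) ≤ 1 / (↑k + 1) := by
      apply one_div_le_one_div_of_le (by positivity)
      have : (k : ℝ) ≤ (Nat.findGreatest (fun k => M k ≤ n) n : ℝ) := by exact_mod_cast hkn
      linarith
    linarith [hk.le]

end Main


section MainB

open Metric Set

universe w

set_option maxHeartbeats 1000000 in
set_option synthInstance.maxHeartbeats 100000 in
private lemma aanr_backward {X : Type u} [MetricSpace X] [CompactSpace X] [Nonempty X]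
    (x₀ : X)
    (H : ∀ (Z : Type v) [TopologicalSpace Z] [CompactSpace Z]
        [TopologicalSpace.MetrizableSpace Z] [Nonempty Z] (Y : Set Z), IsClosed Y →
        ∀ y₀ ∈ Y, (∃ U : Set Z, IsOpen U ∧ U ∩ Y = {y₀}) →
        ∀ Yn : ℕ → Set Z, (∀ n, IsClosed (Yn n)) → (∀ n, Yn (n + 1) ⊆ Yn n) →
          (⋂ n, Yn n) = Y →
          ∀ lam : Z → X, ContinuousOn lam Y → lam y₀ = x₀ →
            ∃ l : ℕ → Z → X,
              (∀ n, ContinuousOn (l n) (Yn n)) ∧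
              (∀ n, l n y₀ = lam y₀) ∧
              ∀ ε > (0 : ℝ), ∃ N : ℕ, ∀ n ≥ N, ∀ y ∈ Y, dist (l n y) (lam y) ≤ ε) :
    IsAANR.{u, w} X := by
  intro Y _ _ θ hθ ε hε
  classical
  have hθc : Continuous θ := hθ.continuous
  haveI : Nonempty Y := ⟨θ (Classical.arbitrary X)⟩
  obtain ⟨G, hGc, hGinj⟩ := aanr_exists_cube_emb Y
  letI : MetricSpace (ℕ → unitInterval) :=
    TopologicalSpace.metrizableSpaceMetric (ℕ → unitInterval)
  set two : Set ℝ := {0, 1} with htwo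
  have hzero : (0 : ℝ) ∈ two := by left; rfl
  have hone : (1 : ℝ) ∈ two := by right; rfl
  haveI : CompactSpace two := isCompact_iff_compactSpace.mp ((Set.toFinite two).isCompact)
  set Z := ULift.{v} ((ℕ → unitInterval) × ↥two) with hZdef
  haveI : CompactSpace Z := Homeomorph.ulift.symm.compactSpace
  -- the copy of Y inside Z
  set ι : Y → Z := fun y => ULift.up (G y, ⟨0, hzero⟩) with hιdef
  have hιc : Continuous ι := continuous_uliftUp.comp (hGc.prodMk continuous_const)
  have hιinj : Function.Injective ι := by
    intro a b hab
    exact hGinj (congrArg (fun z : Z => z.down.1) hab)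
  set ξ : X → Z := fun x => ι (θ x) with hξdef
  have hξc : Continuous ξ := hιc.comp hθc
  have hξinj : Function.Injective ξ := hιinj.comp hθ.injective
  have hrne : (Set.range ξ).Nonempty := Set.range_nonempty ξ
  have hrcl : IsClosed (Set.range ξ) := (isCompact_range hξc).isClosed
  -- coordinate functions
  have hc2 : Continuous (fun z : Z => ((z.down.2 : ℝ))) :=
    continuous_subtype_val.comp (continuous_snd.comp continuous_uliftDown)
  have hξcoord : ∀ x : X, ((ξ x).down.2 : ℝ) = 0 := fun x => rfl
  -- the homeomorphism onto the range
  have hcont' : Continuous (fun x => (⟨ξ x, Set.mem_range_self x⟩ : Set.range ξ)) :=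
    hξc.subtype_mk _
  set e : X ≃ₜ Set.range ξ :=
    Continuous.homeoOfEquivCompactToT2 (f := Equiv.ofInjective ξ hξinj) hcont' with hedef
  have hesymm : ∀ x : X, e.symm ⟨ξ x, Set.mem_range_self x⟩ = x := fun x =>
    Equiv.ofInjective_symm_apply hξinj x
  set lam : Z → X := fun z => if h : z ∈ Set.range ξ then e.symm ⟨z, h⟩ else x₀ with hlamdef
  -- base point
  set z₁ : Z := ULift.up (G (θ x₀), ⟨1, hone⟩) with hz₁def
  have hz₁ : z₁ ∉ Set.range ξ := by
    rintro ⟨x, hx⟩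
    have h01 : (0 : ℝ) = 1 := congrArg (fun z : Z => ((z.down.2 : ℝ))) hx
    norm_num at h01
  set Ys : Set Z := Set.range ξ ∪ {z₁} with hYsdef
  have hYscl : IsClosed Ys := hrcl.union isClosed_singleton
  have hz₁Ys : z₁ ∈ Ys := Or.inr rfl
  -- isolation
  have hiso : ∃ U : Set Z, IsOpen U ∧ U ∩ Ys = {z₁} := by
    refine ⟨(fun z : Z => ((z.down.2 : ℝ))) ⁻¹' Set.Ioi (1/2), isOpen_Ioi.preimage hc2, ?_⟩
    apply Set.Subset.antisymm
    · rintro z ⟨hzU, hzY⟩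
      rcases hzY with ⟨x, rfl⟩ | h
      · exact absurd (show ((1:ℝ)/2) < 0 from hzU) (by norm_num)
      · exact h
    · rintro z rfl
      exact ⟨show ((1:ℝ)/2) < 1 by norm_num, hz₁Ys⟩
  -- the shrinking neighborhoods
  set Yn : ℕ → Set Z := fun n =>
    ({z | Metric.infDist z (Set.range ξ) ≤ 1 / (n + 1)} ∩ {z | ((z.down.2 : ℝ)) = 0}) ∪ {z₁}
    with hYndef
  have hYncl : ∀ n, IsClosed (Yn n) := fun n =>
    ((isClosed_le (continuous_infDist_pt _) continuous_const).inter
      (isClosed_eq hc2 continuous_const)).union isClosed_singleton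
  have hYndec : ∀ n, Yn (n + 1) ⊆ Yn n := by
    intro n z hz
    rcases hz with ⟨h1, h2⟩ | h
    · refine Or.inl ⟨?_, h2⟩
      have h1' : Metric.infDist z (Set.range ξ) ≤ 1 / ((n : ℝ) + 1 + 1) := by
        have h1'' := h1
        simp only [Set.mem_setOf_eq, Nat.cast_add, Nat.cast_one] at h1''
        exact h1''
      show Metric.infDist z (Set.range ξ) ≤ 1 / ((n : ℝ) + 1)
      have hmono : (1:ℝ) / ((n : ℝ) + 1 + 1) ≤ 1 / ((n : ℝ) + 1) := by
        apply one_div_le_one_div_of_le (by positivity)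
        linarith
      linarith
    · exact Or.inr h
  have hYnint : (⋂ n, Yn n) = Ys := by
    apply Set.Subset.antisymm
    · intro z hz
      rw [Set.mem_iInter] at hz
      by_cases hzz : z = z₁
      · exact hzz ▸ hz₁Ys
      · have hall : ∀ n : ℕ, Metric.infDist z (Set.range ξ) ≤ 1 / (n + 1) := by
          intro n
          rcases hz n with ⟨h1, _⟩ | h
          · exact h1
          · exact absurd h hzz
        have h0 : Metric.infDist z (Set.range ξ) = 0 := by
          by_contra hne
          have hpos : 0 < Metric.infDist z (Set.range ξ) :=
            lt_of_le_of_ne Metric.infDist_nonneg (Ne.symm hne)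
          obtain ⟨n, hn⟩ := exists_nat_one_div_lt hpos
          exact absurd (hall n) (not_le.mpr hn)
        have : z ∈ closure (Set.range ξ) := (mem_closure_iff_infDist_zero hrne).mpr h0
        rw [hrcl.closure_eq] at this
        exact Or.inl this
    · intro z hz
      rw [Set.mem_iInter]
      intro n
      rcases hz with ⟨x, rfl⟩ | h
      · refine Or.inl ⟨?_, hξcoord x⟩
        show Metric.infDist (ξ x) (Set.range ξ) ≤ 1 / (n + 1)
        rw [Metric.infDist_zero_of_mem (Set.mem_range_self x)]
        positivity
      · exact Or.inr h
  -- lam : values and continuity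
  have hlamval : ∀ x : X, lam (ξ x) = x := by
    intro x
    have h1 : lam (ξ x) = e.symm ⟨ξ x, Set.mem_range_self x⟩ := dif_pos (Set.mem_range_self x)
    rw [h1]; exact hesymm x
  have hlamz₁ : lam z₁ = x₀ := dif_neg hz₁
  have hlamRange : ContinuousOn lam (Set.range ξ) := by
    rw [continuousOn_iff_continuous_restrict]
    have h1 : (Set.range ξ).domRestrict lam = fun w => e.symm w := by
      funext w
      exact dif_pos w.2
    rw [h1]
    exact e.symm.continuous
  have hlamc : ContinuousOn lam Ys := by
    intro z hz
    rcases hz with hzr | hzz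
    · have hW : {z' : Z | ((z'.down.2 : ℝ)) < 1/2} ∈ 𝓝 z := by
        apply (isOpen_Iio.preimage hc2).mem_nhds
        obtain ⟨x, rfl⟩ := hzr
        exact show ((0:ℝ)) < 1/2 by norm_num
      have hsub : Ys ∩ {z' : Z | ((z'.down.2 : ℝ)) < 1/2} ⊆ Set.range ξ := by
        rintro z' ⟨hz'Y, hz'W⟩
        rcases hz'Y with h | h
        · exact h
        · exfalso
          have hz'eq : z' = z₁ := h
          subst hz'eq
          exact absurd (show ((1:ℝ)) < 1/2 from hz'W) (by norm_num)
      rw [← continuousWithinAt_inter hW]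
      exact (hlamRange z hzr).mono hsub
    · have hz'eq : z = z₁ := hzz
      subst hz'eq
      have hW : {z' : Z | (1:ℝ)/2 < ((z'.down.2 : ℝ))} ∈ 𝓝 z₁ := by
        apply (isOpen_Ioi.preimage hc2).mem_nhds
        exact show (1:ℝ)/2 < 1 by norm_num
      have hsub : Ys ∩ {z' : Z | (1:ℝ)/2 < ((z'.down.2 : ℝ))} ⊆ {z₁} := by
        rintro z' ⟨hz'Y, hz'W⟩
        rcases hz'Y with ⟨x, rfl⟩ | h
        · exact absurd (show ((1:ℝ)/2) < 0 from hz'W) (by norm_num)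
        · exact h
      rw [← continuousWithinAt_inter hW]
      exact continuousWithinAt_singleton.mono hsub
  -- apply the hypothesis
  obtain ⟨l, hlc, hl0, hlconv⟩ := H Z Ys hYscl z₁ hz₁Ys hiso Yn hYncl hYndec hYnint
    lam hlamc hlamz₁
  obtain ⟨ε', hε', hθu⟩ := aanr_unif_cont hθc hε
  obtain ⟨N, hN⟩ := hlconv ε' hε'
  obtain ⟨δ, hδ, hι'⟩ := aanr_unif_cont hιc (show (0:ℝ) < 1 / (N + 1) by positivity)
  refine ⟨δ, hδ, fun y => l N (ι y), ?_, ?_⟩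
  · have hmaps : ∀ y ∈ {y : Y | Metric.infDist y (Set.range θ) ≤ δ}, ι y ∈ Yn N := by
      intro y hy
      refine Or.inl ⟨?_, rfl⟩
      obtain ⟨w, hwmem, hweq⟩ := (isCompact_range hθc).exists_infDist_eq_dist
        (Set.range_nonempty θ) y
      obtain ⟨x, rfl⟩ := hwmem
      have hyx : dist y (θ x) ≤ δ := by rw [← hweq]; exact hy
      show Metric.infDist (ι y) (Set.range ξ) ≤ 1 / (N + 1)
      calc Metric.infDist (ι y) (Set.range ξ) ≤ dist (ι y) (ξ x) :=
            Metric.infDist_le_dist_of_mem (Set.mem_range_self x)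
        _ ≤ 1 / (N + 1) := hι' y (θ x) hyx
    exact (hlc N).comp hιc.continuousOn hmaps
  · intro x
    have hmem : ξ x ∈ Ys := Or.inl (Set.mem_range_self x)
    have hd : dist (l N (ξ x)) (lam (ξ x)) ≤ ε' := hN N le_rfl (ξ x) hmem
    rw [hlamval x] at hd
    exact hθu _ _ hd

end MainB


/-- Let `(X, x₀)` be a pointed compactum.  Then `X` is an AANR if and only if the pointed
approximate extension property holds whenever the base point `y₀` is an isolated point of
the closed subset `Y` of the compactum `Z`: for every decreasing sequence `Y₁ ⊇ Y₂ ⊇ ⋯` of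
closed subsets of `Z` with `⋂ n, Yₙ = Y` and every continuous `λ : Y → X` with `λ y₀ = x₀`,
there are continuous `λₙ : Yₙ → X` with `λₙ y₀ = λ y₀` for every `n` and `λₙ y → λ y`
uniformly over `y ∈ Y`. -/
theorem isAANR_iff_pointed_extension_at_isolated_points
    (X : Type u) [MetricSpace X] [CompactSpace X] [Nonempty X] (x₀ : X) :
    IsAANR X ↔
      ∀ (Z : Type v) [TopologicalSpace Z] [CompactSpace Z]
        [TopologicalSpace.MetrizableSpace Z] [Nonempty Z] (Y : Set Z), IsClosed Y →
        ∀ y₀ ∈ Y, (∃ U : Set Z, IsOpen U ∧ U ∩ Y = {y₀}) →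
        ∀ Yn : ℕ → Set Z, (∀ n, IsClosed (Yn n)) → (∀ n, Yn (n + 1) ⊆ Yn n) →
          (⋂ n, Yn n) = Y →
          ∀ lam : Z → X, ContinuousOn lam Y → lam y₀ = x₀ →
            ∃ l : ℕ → Z → X,
              (∀ n, ContinuousOn (l n) (Yn n)) ∧
              (∀ n, l n y₀ = lam y₀) ∧
              ∀ ε > (0 : ℝ), ∃ N : ℕ, ∀ n ≥ N, ∀ y ∈ Y, dist (l n y) (lam y) ≤ ε := by
  exact ⟨fun hA => aanr_forward x₀ hA, fun h => aanr_backward x₀ h⟩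
end
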